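/- If r ≥ 2 and t is a positive multiple of r + 2, then the graph G_{r,t}, which has maximum degree Δ = r + 1 and n = (2r+1)t vertices, satisfies γ'_R(G_{r,t}) = 2rt > ⌈(Δ/(Δ+1)) · n⌉; equivalently, 2rt > ⌈((r+1)(2r+1)t)/(r+2)⌉. In particular, such graphs disprove the conjecture that γ'_R(G) ≤ ⌈(Δ/(Δ+1)) n⌉ for every graph G of maximum degree Δ on n vertices. -/

import Mathlib

open Finset SimpleGraph

/-- An edge Roman dominating function: values in {0,1,2} on edges (0 elsewhere),
and every edge with value 0 is adjacent to a distinct edge with value 2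
sharing an endpoint with it. -/
def EdgeRDF {V : Type*} (G : SimpleGraph V) (f : Sym2 V → ℕ) : Prop :=
  (∀ e, f e ≤ 2) ∧ (∀ e, e ∉ G.edgeSet → f e = 0) ∧
  (∀ e ∈ G.edgeSet, f e = 0 →
    ∃ e' ∈ G.edgeSet, f e' = 2 ∧ e' ≠ e ∧ ∃ v, v ∈ e ∧ v ∈ e')

/-- The edge Roman domination number: the minimum weight of an
edge Roman dominating function. -/
noncomputable def edgeRomanNumber (V : Type*) [Fintype V] [DecidableEq V]
    (G : SimpleGraph V) : ℕ :=
  sInf {w | ∃ f : Sym2 V → ℕ, EdgeRDF G f ∧ w = ∑ e : Sym2 V, f e}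


/-- The graph `G_{r,t}`: `t` disjoint copies of `K_{r,r+1}`, the `i`-th copy having
partite sets `X_i` (of size `r`, the `inl` part) and `Y_i` (of size `r+1`, the `inr` part),
together with the cyclically-added edges `y^i_{r+1} y^{i+1}_1`. -/
def Grt (r t : ℕ) : SimpleGraph (Fin t × (Fin r ⊕ Fin (r + 1))) :=
  SimpleGraph.fromRel (fun a b =>
    (a.1 = b.1 ∧ ∃ x y, a.2 = Sum.inl x ∧ b.2 = Sum.inr y) ∨
    (b.1.val = (a.1.val + 1) % t ∧ a.2 = Sum.inr (Fin.last r) ∧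
      b.2 = Sum.inr (0 : Fin (r + 1))))
namespace GrtAux

abbrev Vt (r t : ℕ) := Fin t × (Fin r ⊕ Fin (r + 1))

def ge {r t : ℕ} (i : Fin t) (p : Fin r × Fin (r + 1)) : Sym2 (Vt r t) :=
  s((i, Sum.inl p.1), (i, Sum.inr p.2))

def ce {r t : ℕ} [NeZero t] (i : Fin t) : Sym2 (Vt r t) :=
  s((i, Sum.inr (Fin.last r)), (i + 1, (Sum.inr 0 : Fin r ⊕ Fin (r + 1))))

lemma val_add_one {t : ℕ} [NeZero t] (i : Fin t) : ((i + 1 : Fin t) : ℕ) = (i.val + 1) % t := by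
  rw [Fin.val_add, Fin.val_one', Nat.add_mod, Nat.mod_mod_of_dvd _ dvd_rfl, ← Nat.add_mod]

lemma ge_mem_edgeSet {r t : ℕ} (i : Fin t) (p : Fin r × Fin (r + 1)) :
    ge i p ∈ (Grt r t).edgeSet := by
  rw [ge, SimpleGraph.mem_edgeSet, Grt, SimpleGraph.fromRel_adj]
  exact ⟨by simp, Or.inl (Or.inl ⟨rfl, p.1, p.2, rfl, rfl⟩)⟩

/-- Every edge of `Grt` is an internal edge or a connector edge. -/
lemma edge_form {r t : ℕ} [NeZero t] {u w : Vt r t} (h : (Grt r t).Adj u w) :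
    (∃ i x y, s(u, w) = ge i (x, y)) ∨ (∃ i, s(u, w) = ce i) := by
  obtain ⟨u1, u2⟩ := u
  obtain ⟨w1, w2⟩ := w
  rw [Grt, SimpleGraph.fromRel_adj] at h
  obtain ⟨-, h | h⟩ := h
  · rcases h with ⟨h1, x, y, hx, hy⟩ | ⟨h1, h2, h3⟩
    · refine Or.inl ⟨u1, x, y, ?_⟩
      dsimp at h1 hx hy; subst h1 hx hy; rfl
    · refine Or.inr ⟨u1, ?_⟩
      dsimp at h1 h2 h3; subst h2 h3
      have : w1 = u1 + 1 := by
        apply Fin.ext; rw [val_add_one]; exact h1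
      subst this; rfl
  · rcases h with ⟨h1, x, y, hx, hy⟩ | ⟨h1, h2, h3⟩
    · refine Or.inl ⟨w1, x, y, ?_⟩
      dsimp at h1 hx hy; subst hx hy
      rw [Sym2.eq_swap, h1]; rfl
    · refine Or.inr ⟨w1, ?_⟩
      dsimp at h1 h2 h3; subst h2 h3
      have : u1 = w1 + 1 := by
        apply Fin.ext; rw [val_add_one]; exact h1
      subst this; rw [Sym2.eq_swap]; rfl

end GrtAux
namespace GrtAux

lemma ge_inj {r t : ℕ} {i j : Fin t} {p q : Fin r × Fin (r + 1)}
    (h : ge i p = ge j q) : i = j ∧ p = q := by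
  rw [ge, ge, Sym2.eq_iff] at h
  obtain ⟨p1, p2⟩ := p; obtain ⟨q1, q2⟩ := q
  rcases h with ⟨h1, h2⟩ | ⟨h1, h2⟩ <;> simp_all [Prod.ext_iff]

lemma last_ne_zero {r : ℕ} (hr : 1 ≤ r) : (Fin.last r) ≠ (0 : Fin (r + 1)) := by
  intro h
  have := congrArg Fin.val h
  simp [Fin.last] at this
  omega

lemma ce_inj {r t : ℕ} [NeZero t] (hr : 1 ≤ r) {i j : Fin t}
    (h : ce (r := r) i = ce j) : i = j := by
  rw [ce, ce, Sym2.eq_iff] at h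
  rcases h with ⟨h1, h2⟩ | ⟨h1, h2⟩
  · exact (Prod.ext_iff.1 h1).1
  · exfalso
    have := (Prod.ext_iff.1 h1).2
    simp only [Sum.inr.injEq] at this
    exact last_ne_zero hr this

lemma ge_ne_ce {r t : ℕ} [NeZero t] (i j : Fin t) (p : Fin r × Fin (r + 1)) :
    ge i p ≠ ce j := by
  rw [ge, ce]
  intro h
  rw [Sym2.eq_iff] at h
  rcases h with ⟨h1, h2⟩ | ⟨h1, h2⟩ <;> simp [Prod.ext_iff] at h1

/-- Classification of edges through an `inl` vertex. -/
lemma edge_at_inl {r t : ℕ} [NeZero t] {e : Sym2 (Vt r t)} (he : e ∈ (Grt r t).edgeSet)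
    {i : Fin t} {x : Fin r} (hv : ((i, Sum.inl x) : Vt r t) ∈ e) :
    ∃ y, e = ge i (x, y) := by
  induction e using Sym2.ind with
  | _ u w =>
    rw [SimpleGraph.mem_edgeSet] at he
    rcases edge_form he with ⟨j, x', y', hf⟩ | ⟨j, hf⟩
    · rw [hf] at hv ⊢
      rw [ge, Sym2.mem_iff] at hv
      rcases hv with hv | hv
      · obtain ⟨h1, h2⟩ := Prod.mk.injEq .. ▸ hv
        simp only [Sum.inl.injEq] at h2
        exact ⟨y', by rw [h1, h2]⟩
      · exfalso; exact absurd (Prod.mk.injEq .. ▸ hv).2 (by simp)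
    · exfalso
      rw [hf, ce, Sym2.mem_iff] at hv
      rcases hv with hv | hv <;> exact absurd (Prod.mk.injEq .. ▸ hv).2 (by simp)

/-- Classification of edges through an `inr` vertex. -/
lemma edge_at_inr {r t : ℕ} [NeZero t] (hr : 1 ≤ r) {e : Sym2 (Vt r t)}
    (he : e ∈ (Grt r t).edgeSet) {i : Fin t} {y : Fin (r + 1)}
    (hv : ((i, Sum.inr y) : Vt r t) ∈ e) :
    (∃ x, e = ge i (x, y)) ∨ (y = Fin.last r ∧ e = ce i) ∨ (y = 0 ∧ e = ce (i - 1)) := by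
  induction e using Sym2.ind with
  | _ u w =>
    rw [SimpleGraph.mem_edgeSet] at he
    rcases edge_form he with ⟨j, x', y', hf⟩ | ⟨j, hf⟩
    · rw [hf] at hv ⊢
      rw [ge, Sym2.mem_iff] at hv
      rcases hv with hv | hv
      · exact absurd (Prod.mk.injEq .. ▸ hv).2 (by simp)
      · obtain ⟨h1, h2⟩ := Prod.mk.injEq .. ▸ hv
        simp only [Sum.inr.injEq] at h2
        exact Or.inl ⟨x', by rw [h1, h2]⟩
    · rw [hf] at hv ⊢
      rw [ce, Sym2.mem_iff] at hv
      rcases hv with hv | hv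
      · obtain ⟨h1, h2⟩ := Prod.mk.injEq .. ▸ hv
        simp only [Sum.inr.injEq] at h2
        exact Or.inr (Or.inl ⟨h2, by rw [h1]⟩)
      · obtain ⟨h1, h2⟩ := Prod.mk.injEq .. ▸ hv
        simp only [Sum.inr.injEq] at h2
        refine Or.inr (Or.inr ⟨h2, ?_⟩)
        have : j = i - 1 := by rw [h1]; exact (add_sub_cancel_right j 1).symm
        rw [this]

end GrtAux
namespace GrtAux

lemma arith_core (m h : ℕ) (hm : 1 ≤ m) (hh : h ≤ 2) :
    2 * m ≤ m * (m + 1 - h) + h := by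
  have hk : ∀ k : ℕ, k ≤ k * k := by
    intro k
    rcases Nat.eq_zero_or_pos k with h | h
    · simp [h]
    · exact Nat.le_mul_of_pos_left k h
  interval_cases h
  · have : m ≤ m * m := hk m
    have e : m * (m + 1 - 0) = m * m + m := by simp; ring
    omega
  · have e : m * (m + 1 - 1) = m * m := by simp
    rcases Nat.lt_or_ge m 2 with hm2 | hm2
    · have : m = 1 := by omega
      subst this; simp
    · have : 2 * m ≤ m * m := Nat.mul_le_mul_right m hm2
      omega
  · obtain ⟨k, rfl⟩ : ∃ k, m = k + 1 := ⟨m - 1, by omega⟩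
    have e : (k + 1) * (k + 1 + 1 - 2) = k * k + k := by
      have : k + 1 + 1 - 2 = k := by omega
      rw [this]; ring
    have : k ≤ k * k := hk k
    omega

lemma arith (r d a s h : ℕ) (had : a ≤ d) (har : a ≤ r) (hs : s ≤ d + h) (hh : h ≤ 2) :
    2 * r ≤ 2 * d + (r - a) * (r + 1 - s) + h := by
  rcases Nat.lt_or_ge d r with hdr | hdr
  · have h1 : r - d ≤ r - a := Nat.sub_le_sub_left had r
    have h2 : r + 1 - (d + h) ≤ r + 1 - s := Nat.sub_le_sub_left hs (r + 1)
    have h3 : (r - d) * (r + 1 - (d + h)) ≤ (r - a) * (r + 1 - s) := Nat.mul_le_mul h1 h2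
    obtain ⟨m, hm, hm1⟩ : ∃ m, r = d + m ∧ 1 ≤ m := ⟨r - d, by omega, by omega⟩
    subst hm
    have h4 : d + m + 1 - (d + h) = m + 1 - h := by omega
    rw [h4] at h3
    have h5 : d + m - d = m := by omega
    rw [h5] at h3
    have := arith_core m h hm1 hh
    omega
  · omega

end GrtAux
namespace GrtAux

lemma copy_bound {r t : ℕ} [NeZero t] (hr : 1 ≤ r) (f : Sym2 (Vt r t) → ℕ)
    (hf : EdgeRDF (Grt r t) f) (i : Fin t) :
    2 * r ≤ (∑ p : Fin r × Fin (r + 1), f (ge i p)) +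
      ((if f (ce (r := r) (i - 1)) = 2 then 1 else 0) +
       (if f (ce (r := r) i) = 2 then 1 else 0)) := by
  classical
  set F : Fin r × Fin (r + 1) → ℕ := fun p => f (ge i p) with hF
  set P : Finset (Fin r × Fin (r + 1)) := univ.filter (fun p => F p = 2) with hP
  set SF : Finset (Fin (r + 1)) :=
    (if f (ce (r := r) (i - 1)) = 2 then {0} else ∅) ∪
    (if f (ce (r := r) i) = 2 then {Fin.last r} else ∅) with hSF
  set XC : Finset (Fin r) := P.image Prod.fst with hXC
  set YC : Finset (Fin (r + 1)) := P.image Prod.snd ∪ SF with hYC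
  set U : Finset (Fin r × Fin (r + 1)) := (univ \ XC) ×ˢ (univ \ YC) with hU
  have hU1 : ∀ p ∈ U, 1 ≤ F p := by
    intro p hp
    rw [hU, Finset.mem_product, Finset.mem_sdiff, Finset.mem_sdiff] at hp
    obtain ⟨⟨-, hpx⟩, -, hpy⟩ := hp
    by_contra hlt
    have hF0 : f (ge i p) = 0 := by simp only [hF] at hlt; omega
    obtain ⟨e', he'S, he'2, -, v, hve, hve'⟩ :=
      hf.2.2 (ge i p) (ge_mem_edgeSet i p) hF0
    rw [ge, Sym2.mem_iff] at hve
    rcases hve with rfl | rfl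
    · obtain ⟨y, rfl⟩ := edge_at_inl he'S hve'
      apply hpx
      rw [hXC]
      exact Finset.mem_image.2 ⟨(p.1, y),
        Finset.mem_filter.2 ⟨Finset.mem_univ _, he'2⟩, rfl⟩
    · apply hpy
      rw [hYC]
      rcases edge_at_inr hr he'S hve' with ⟨x, rfl⟩ | ⟨hy, rfl⟩ | ⟨hy, rfl⟩
      · exact Finset.mem_union_left _
          (Finset.mem_image.2 ⟨(x, p.2),
            Finset.mem_filter.2 ⟨Finset.mem_univ _, he'2⟩, rfl⟩)
      · refine Finset.mem_union_right _ ?_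
        rw [hSF, hy]
        exact Finset.mem_union_right _
          (by rw [if_pos he'2]; exact Finset.mem_singleton_self _)
      · refine Finset.mem_union_right _ ?_
        rw [hSF, hy]
        exact Finset.mem_union_left _
          (by rw [if_pos he'2]; exact Finset.mem_singleton_self _)
  have hdisj : Disjoint P U := by
    rw [Finset.disjoint_left]
    intro p hpP hpU
    rw [hU, Finset.mem_product, Finset.mem_sdiff] at hpU
    exact hpU.1.2 (by rw [hXC]; exact Finset.mem_image.2 ⟨p, hpP, rfl⟩)
  have hPsum : ∑ p ∈ P, F p = 2 * P.card := by
    rw [Finset.sum_congr rfl (fun p hp => (Finset.mem_filter.1 hp).2),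
      Finset.sum_const, smul_eq_mul, mul_comm]
  have hUsum : U.card ≤ ∑ p ∈ U, F p := by
    calc U.card = ∑ _p ∈ U, 1 := by rw [Finset.sum_const, smul_eq_mul, mul_one]
    _ ≤ _ := Finset.sum_le_sum hU1
  have hsum : 2 * P.card + U.card ≤ ∑ p : Fin r × Fin (r + 1), F p := by
    calc 2 * P.card + U.card ≤ (∑ p ∈ P, F p) + ∑ p ∈ U, F p := by
          rw [hPsum]; omega
    _ = ∑ p ∈ P ∪ U, F p := (Finset.sum_union hdisj).symm
    _ ≤ _ := Finset.sum_le_sum_of_subset (Finset.subset_univ _)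
  have hXCcard : XC.card ≤ P.card := Finset.card_image_le
  have hXCr : XC.card ≤ r := by
    have := Finset.card_le_univ XC
    simpa using this
  have hSFcard : SF.card ≤
      (if f (ce (r := r) (i - 1)) = 2 then 1 else 0) +
      (if f (ce (r := r) i) = 2 then 1 else 0) := by
    rw [hSF]
    refine (Finset.card_union_le _ _).trans ?_
    gcongr <;> split <;> simp
  have hYCcard : YC.card ≤ P.card + SF.card := by
    rw [hYC]
    refine (Finset.card_union_le _ _).trans ?_
    gcongr
    exact Finset.card_image_le
  have hUcard : U.card = (r - XC.card) * (r + 1 - YC.card) := by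
    rw [hU, Finset.card_product, Finset.card_sdiff_of_subset (Finset.subset_univ _),
      Finset.card_sdiff_of_subset (Finset.subset_univ _)]
    simp
  set H := (if f (ce (r := r) (i - 1)) = 2 then 1 else 0) +
      (if f (ce (r := r) i) = 2 then 1 else 0) with hH
  have hH2 : H ≤ 2 := by rw [hH]; split_ifs <;> omega
  have final := arith r P.card XC.card YC.card H hXCcard hXCr
    (hYCcard.trans (by omega)) hH2
  rw [← hUcard] at final
  refine final.trans (Nat.add_le_add_right ?_ H)
  exact hsum

end GrtAux
namespace GrtAux

lemma lower_bound {r t : ℕ} (hr : 1 ≤ r) (ht : 2 ≤ t) (f : Sym2 (Vt r t) → ℕ)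
    (hf : EdgeRDF (Grt r t) f) : 2 * r * t ≤ ∑ e : Sym2 (Vt r t), f e := by
  haveI : NeZero t := ⟨by omega⟩
  classical
  set M1 : Finset (Sym2 (Vt r t)) :=
    univ.biUnion (fun i : Fin t =>
      (univ : Finset (Fin r × Fin (r + 1))).image (ge i)) with hM1
  set M2 : Finset (Sym2 (Vt r t)) := univ.image (fun i : Fin t => ce (r := r) i) with hM2
  have hM1sum : ∑ e ∈ M1, f e = ∑ i : Fin t, ∑ p : Fin r × Fin (r + 1), f (ge i p) := by
    rw [hM1, Finset.sum_biUnion]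
    · exact Finset.sum_congr rfl fun i _ =>
        Finset.sum_image (fun p _ q _ h => (ge_inj h).2)
    · intro a _ b _ hab
      rw [Function.onFun, Finset.disjoint_left]
      intro e hea heb
      simp only [Finset.mem_image] at hea heb
      obtain ⟨p, -, rfl⟩ := hea
      obtain ⟨q, -, hq⟩ := heb
      exact hab (ge_inj hq).1.symm
  have hM2sum : ∑ e ∈ M2, f e = ∑ i : Fin t, f (ce (r := r) i) := by
    rw [hM2]
    exact Finset.sum_image (fun a _ b _ h => ce_inj hr h)
  have hdisj : Disjoint M1 M2 := by
    rw [Finset.disjoint_left]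
    intro e he1 he2
    rw [hM1, Finset.mem_biUnion] at he1
    rw [hM2, Finset.mem_image] at he2
    obtain ⟨i, -, he1⟩ := he1
    obtain ⟨p, -, rfl⟩ := Finset.mem_image.1 he1
    obtain ⟨j, -, hj⟩ := he2
    exact ge_ne_ce i j p hj.symm
  have htotal : (∑ e ∈ M1, f e) + (∑ e ∈ M2, f e) ≤ ∑ e : Sym2 (Vt r t), f e := by
    rw [← Finset.sum_union hdisj]
    exact Finset.sum_le_sum_of_subset (Finset.subset_univ _)
  have key : ∑ i : Fin t, (2 * r) ≤
      ∑ i : Fin t, ((∑ p : Fin r × Fin (r + 1), f (ge i p)) +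
        ((if f (ce (r := r) (i - 1)) = 2 then 1 else 0) +
         (if f (ce (r := r) i) = 2 then 1 else 0))) :=
    Finset.sum_le_sum fun i _ => copy_bound hr f hf i
  rw [Finset.sum_const, Finset.card_univ, Fintype.card_fin, smul_eq_mul] at key
  rw [Finset.sum_add_distrib] at key
  rw [Finset.sum_add_distrib] at key
  have hre : ∑ i : Fin t, (if f (ce (r := r) (i - 1)) = 2 then 1 else 0) =
      ∑ i : Fin t, (if f (ce (r := r) i) = 2 then 1 else 0) :=
    Fintype.sum_equiv (Equiv.subRight (1 : Fin t))
      (fun i => if f (ce (r := r) (i - 1)) = 2 then 1 else 0)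
      (fun i => if f (ce (r := r) i) = 2 then 1 else 0) (fun i => rfl)
  rw [hre] at key
  have hce : ∑ i : Fin t, ((if f (ce (r := r) i) = 2 then 1 else 0) +
      (if f (ce (r := r) i) = 2 then 1 else 0)) ≤ ∑ i : Fin t, f (ce (r := r) i) := by
    refine Finset.sum_le_sum fun i _ => ?_
    split_ifs with h
    · omega
    · omega
  rw [← Finset.sum_add_distrib] at key
  have : 2 * r * t ≤ (∑ e ∈ M1, f e) + (∑ e ∈ M2, f e) := by
    rw [hM1sum, hM2sum]
    calc 2 * r * t = t * (2 * r) := by ring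
    _ ≤ _ := key.trans (by omega)
  exact this.trans htotal

end GrtAux
namespace GrtAux

open Classical in
noncomputable def fopt (r t : ℕ) : Sym2 (Vt r t) → ℕ := fun e =>
  if ∃ (i : Fin t) (x : Fin r), e = ge i (x, x.castSucc) then 2 else 0

lemma fopt_le (r t : ℕ) (e : Sym2 (Vt r t)) : fopt r t e ≤ 2 := by
  rw [fopt]; split <;> omega

lemma fopt_match (r t : ℕ) (i : Fin t) (x : Fin r) : fopt r t (ge i (x, x.castSucc)) = 2 := by
  rw [fopt, if_pos ⟨i, x, rfl⟩]

lemma fopt_eq_zero_or (r t : ℕ) (e : Sym2 (Vt r t)) :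
    fopt r t e = 0 ∨ ∃ (i : Fin t) (x : Fin r), e = ge i (x, x.castSucc) := by
  rw [fopt]; split
  · right; assumption
  · left; rfl

lemma fopt_isERDF (r t : ℕ) (hr : 1 ≤ r) (ht : 2 ≤ t) :
    EdgeRDF (Grt r t) (fopt r t) := by
  haveI : NeZero t := ⟨by omega⟩
  haveI : NeZero r := ⟨by omega⟩
  refine ⟨fopt_le r t, ?_, ?_⟩
  · intro e he
    rcases fopt_eq_zero_or r t e with h | ⟨i, x, rfl⟩
    · exact h
    · exact absurd (ge_mem_edgeSet i (x, x.castSucc)) he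
  · intro e he h0
    induction e using Sym2.ind with
    | _ u w =>
      rw [SimpleGraph.mem_edgeSet] at he
      rcases edge_form he with ⟨i, x, y, hf⟩ | ⟨i, hf⟩
      · refine ⟨ge i (x, x.castSucc), ge_mem_edgeSet _ _, fopt_match r t i x, ?_,
          (i, Sum.inl x), ?_, ?_⟩
        · intro hc; rw [← hc, fopt_match] at h0; omega
        · rw [hf, ge, Sym2.mem_iff]; left; rfl
        · rw [ge, Sym2.mem_iff]; left; rfl
      · refine ⟨ge (i + 1) (0, Fin.castSucc 0), ge_mem_edgeSet _ _, fopt_match r t (i + 1) 0, ?_,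
          ((i + 1 : Fin t), (Sum.inr 0 : Fin r ⊕ Fin (r + 1))), ?_, ?_⟩
        · intro hc; rw [← hc, fopt_match] at h0; omega
        · rw [hf, ce, Sym2.mem_iff]; right; rfl
        · rw [ge, Sym2.mem_iff]; right
          have : Fin.castSucc (0 : Fin r) = (0 : Fin (r + 1)) := by
            apply Fin.ext; simp
          rw [this]
  
lemma fopt_sum (r t : ℕ) : ∑ e : Sym2 (Vt r t), fopt r t e = 2 * r * t := by
  classical
  set M : Finset (Sym2 (Vt r t)) :=
    (univ : Finset (Fin t × Fin r)).image (fun q => ge q.1 (q.2, q.2.castSucc)) with hM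
  have hmem : ∀ e, fopt r t e = if e ∈ M then 2 else 0 := by
    intro e
    rw [fopt, hM]
    congr 1
    simp only [Finset.mem_image, Finset.mem_univ, true_and, eq_iff_iff]
    constructor
    · rintro ⟨i, x, rfl⟩; exact ⟨(i, x), rfl⟩
    · rintro ⟨⟨i, x⟩, rfl⟩; exact ⟨i, x, rfl⟩
  have hcard : M.card = t * r := by
    rw [hM, Finset.card_image_of_injective _ ?_, Finset.card_univ]
    · simp
    · intro a b hab
      have h1 := (ge_inj hab).1
      have h2 := congrArg Prod.fst (ge_inj hab).2
      exact Prod.ext h1 h2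
  calc ∑ e : Sym2 (Vt r t), fopt r t e = ∑ e ∈ M, 2 := by
        rw [Finset.sum_congr rfl fun e _ => hmem e, Finset.sum_ite_mem,
          Finset.univ_inter]
  _ = 2 * r * t := by rw [Finset.sum_const, smul_eq_mul, hcard]; ring

end GrtAux
namespace GrtAux

lemma ern_eq {r t : ℕ} (hr : 1 ≤ r) (ht : 2 ≤ t) :
    edgeRomanNumber (Vt r t) (Grt r t) = 2 * r * t := by
  have hmem : 2 * r * t ∈
      {w | ∃ f : Sym2 (Vt r t) → ℕ, EdgeRDF (Grt r t) f ∧ w = ∑ e : Sym2 (Vt r t), f e} :=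
    ⟨fopt r t, fopt_isERDF r t hr ht, (fopt_sum r t).symm⟩
  refine le_antisymm (Nat.sInf_le hmem) (le_csInf ⟨_, hmem⟩ ?_)
  rintro w ⟨f, hf, rfl⟩
  exact lower_bound hr ht f hf

def inlEmb (r t : ℕ) (i : Fin t) : Fin r ↪ Vt r t :=
  ⟨fun x => (i, Sum.inl x), fun a b h => by simpa using h⟩

lemma degree_inl {r t : ℕ} [DecidableRel (Grt r t).Adj] (i : Fin t) (x : Fin r) :
    (Grt r t).degree (i, Sum.inl x) = r + 1 := by
  have hns : (Grt r t).neighborFinset (i, Sum.inl x) =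
      univ.map ⟨fun y : Fin (r + 1) => ((i, Sum.inr y) : Vt r t),
        fun a b h => by simpa using h⟩ := by
    ext b
    rw [SimpleGraph.mem_neighborFinset, Finset.mem_map]
    constructor
    · intro hadj
      obtain ⟨b1, b2⟩ := b
      rw [Grt, SimpleGraph.fromRel_adj] at hadj
      obtain ⟨hne, h | h⟩ := hadj
      · rcases h with ⟨h1, x', y, hx, hy⟩ | ⟨h1, h2, h3⟩
        · dsimp at h1 hx hy
          exact ⟨y, Finset.mem_univ _, by simp [h1, hy]⟩
        · exact absurd h2 (by simp)
      · rcases h with ⟨h1, x', y, hx, hy⟩ | ⟨h1, h2, h3⟩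
        · exact absurd hy (by simp)
        · exact absurd h3 (by simp)
    · rintro ⟨y, -, rfl⟩
      rw [Grt, SimpleGraph.fromRel_adj]
      exact ⟨fun h => Sum.inl_ne_inr (congrArg Prod.snd h), Or.inl (Or.inl ⟨rfl, x, y, rfl, rfl⟩)⟩
  rw [SimpleGraph.degree, hns, Finset.card_map, Finset.card_univ, Fintype.card_fin]

lemma degree_inr_le {r t : ℕ} [NeZero t] [DecidableRel (Grt r t).Adj] (hr : 1 ≤ r)
    (i : Fin t) (y : Fin (r + 1)) : (Grt r t).degree (i, Sum.inr y) ≤ r + 1 := by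
  classical
  by_cases hy : y = Fin.last r
  · have hsub : (Grt r t).neighborFinset (i, Sum.inr y) ⊆
        (univ.map (inlEmb r t i)) ∪ {((i + 1 : Fin t), (Sum.inr 0 : Fin r ⊕ Fin (r + 1)))} := by
      intro b hb
      rw [SimpleGraph.mem_neighborFinset, Grt, SimpleGraph.fromRel_adj] at hb
      obtain ⟨b1, b2⟩ := b
      obtain ⟨hne, h | h⟩ := hb
      · rcases h with ⟨h1, x', y', hx, hy'⟩ | ⟨h1, h2, h3⟩
        · exact absurd hx (by simp)
        · refine Finset.mem_union_right _ ?_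
          dsimp at h1 h3
          have hb1 : b1 = i + 1 := by apply Fin.ext; rw [val_add_one]; exact h1
          rw [Finset.mem_singleton, hb1, h3]
      · rcases h with ⟨h1, x', y', hx, hy'⟩ | ⟨h1, h2, h3⟩
        · refine Finset.mem_union_left _ ?_
          dsimp at h1 hx
          rw [Finset.mem_map]
          exact ⟨x', Finset.mem_univ _, by rw [inlEmb]; simp [h1, hx]; rfl⟩
        · exfalso
          dsimp at h3
          simp only [Sum.inr.injEq] at h3
          rw [hy] at h3
          exact last_ne_zero hr h3
    calc (Grt r t).degree (i, Sum.inr y) ≤ _ := Finset.card_le_card hsub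
    _ ≤ _ := Finset.card_union_le _ _
    _ ≤ r + 1 := by simp
  · have hsub : (Grt r t).neighborFinset (i, Sum.inr y) ⊆
        (univ.map (inlEmb r t i)) ∪
          {((i - 1 : Fin t), (Sum.inr (Fin.last r) : Fin r ⊕ Fin (r + 1)))} := by
      intro b hb
      rw [SimpleGraph.mem_neighborFinset, Grt, SimpleGraph.fromRel_adj] at hb
      obtain ⟨b1, b2⟩ := b
      obtain ⟨hne, h | h⟩ := hb
      · rcases h with ⟨h1, x', y', hx, hy'⟩ | ⟨h1, h2, h3⟩
        · exact absurd hx (by simp)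
        · exfalso
          dsimp at h2
          simp only [Sum.inr.injEq] at h2
          exact hy h2
      · rcases h with ⟨h1, x', y', hx, hy'⟩ | ⟨h1, h2, h3⟩
        · refine Finset.mem_union_left _ ?_
          dsimp at h1 hx
          rw [Finset.mem_map]
          exact ⟨x', Finset.mem_univ _, by rw [inlEmb]; simp [h1, hx]; rfl⟩
        · refine Finset.mem_union_right _ ?_
          dsimp at h1 h2
          have hb1 : i = b1 + 1 := by apply Fin.ext; rw [val_add_one]; exact h1
          have : b1 = i - 1 := by rw [hb1]; exact (add_sub_cancel_right b1 1).symm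
          rw [Finset.mem_singleton, this, h2]
    calc (Grt r t).degree (i, Sum.inr y) ≤ _ := Finset.card_le_card hsub
    _ ≤ _ := Finset.card_union_le _ _
    _ ≤ r + 1 := by simp

lemma maxdeg {r t : ℕ} (hr : 1 ≤ r) (ht : 2 ≤ t) [DecidableRel (Grt r t).Adj] :
    (Grt r t).maxDegree = r + 1 := by
  haveI : NeZero t := ⟨by omega⟩
  apply le_antisymm
  · apply SimpleGraph.maxDegree_le_of_forall_degree_le
    rintro ⟨i, s⟩
    cases s with
    | inl x => exact (degree_inl i x).le
    | inr y => exact degree_inr_le hr i y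
  · have := SimpleGraph.degree_le_maxDegree (Grt r t)
      ((⟨0, by omega⟩ : Fin t), Sum.inl (⟨0, by omega⟩ : Fin r))
    rwa [degree_inl] at this

lemma ceil_part (r t : ℕ) (hr : 2 ≤ r) (ht : 1 ≤ t) (hdvd : (r + 2) ∣ t) :
    ((2 * r * t : ℤ) >
      ⌈(((r : ℚ) + 1) * ((2 * r + 1) * t)) / ((r : ℚ) + 1 + 1)⌉) := by
  obtain ⟨s, rfl⟩ := hdvd
  have hs : 1 ≤ s := by by_contra h; push_neg at h; interval_cases s <;> omega
  have hq : (((r : ℚ) + 1) * ((2 * r + 1) * (((r + 2) * s : ℕ) : ℚ))) / ((r : ℚ) + 1 + 1)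
      = ((((r : ℤ) + 1) * (2 * r + 1) * s : ℤ) : ℚ) := by
    have h2 : ((r : ℚ) + 1 + 1) ≠ 0 := by positivity
    field_simp
    push_cast
    ring
  rw [hq, Int.ceil_intCast]
  have hr' : (2 : ℤ) ≤ (r : ℤ) := by exact_mod_cast hr
  have hs' : (1 : ℤ) ≤ (s : ℤ) := by exact_mod_cast hs
  have hexp : (2 * r * ((r + 2) * s) : ℤ) = 2 * (r : ℤ) * (((r : ℤ) + 2) * s) := by push_cast; ring
  rw [gt_iff_lt, show ((2 : ℤ) * r * (((r + 2) * s : ℕ) : ℤ)) = 2 * (r : ℤ) * (((r : ℤ) + 2) * (s : ℤ)) by push_cast; ring]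
  nlinarith

end GrtAux
/-- If `r ≥ 2` and `t` is a positive multiple of `r + 2`, then `G_{r,t}` has maximum degree
`Δ = r + 1`, has `n = (2r+1)t` vertices, and satisfies
`γ'_R(G_{r,t}) = 2rt > ⌈(Δ/(Δ+1))·n⌉`, disproving the conjecture
`γ'_R(G) ≤ ⌈(Δ/(Δ+1))·n⌉`. -/
theorem Grt_counterexample (r t : ℕ) (hr : 2 ≤ r) (ht : 1 ≤ t) (hdvd : (r + 2) ∣ t) :
    (@SimpleGraph.maxDegree (Fin t × (Fin r ⊕ Fin (r + 1))) (Grt r t) _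
        (Classical.decRel _) = r + 1) ∧
    Fintype.card (Fin t × (Fin r ⊕ Fin (r + 1))) = (2 * r + 1) * t ∧
    edgeRomanNumber (Fin t × (Fin r ⊕ Fin (r + 1))) (Grt r t) = 2 * r * t ∧
    ((2 * r * t : ℤ) >
      ⌈(((r : ℚ) + 1) * ((2 * r + 1) * t)) / ((r : ℚ) + 1 + 1)⌉) := by
  have ht2 : 2 ≤ t := by
    have := Nat.le_of_dvd (by omega) hdvd
    omega
  refine ⟨@GrtAux.maxdeg r t (by omega) ht2 (Classical.decRel _), ?_, GrtAux.ern_eq (by omega) ht2,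
    GrtAux.ceil_part r t hr ht hdvd⟩
  rw [Fintype.card_prod, Fintype.card_sum, Fintype.card_fin, Fintype.card_fin,
    Fintype.card_fin]
  ring
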